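/- Let V be a doubled word, Σ a finite alphabet with q ≥ 2 letters, and W_n ∈ Σ^n chosen uniformly at random. Then for every positive integer p, the p-th central moment satisfies E(|δ(V,W_n) − E(δ(V,W_n))|^p) = O((log(n)/n)^p). -/

import Mathlib

open Filter Asymptotics

/-- The substring `W[i,j]` of `W`: the `j - i` consecutive letters of `W`
beginning with the `(i+1)`-th. -/
def subword {β : Type*} (W : List β) (i j : ℕ) : List β :=
  (W.drop i).take (j - i)

/-- `W` is an instance of `V` provided `W = φ(V)` for some nonerasing
homomorphism `φ`, i.e. a map on letters (no letter mapping to the empty word)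
extended by concatenation. -/
def IsInstance {α β : Type*} (V : List α) (W : List β) : Prop :=
  ∃ φ : α → List β, (∀ a, φ a ≠ []) ∧ W = (V.map φ).flatten

/-- A word is doubled provided every letter occurring in it occurs at least twice. -/
def Doubled {α : Type*} [DecidableEq α] (V : List α) : Prop :=
  ∀ a ∈ V, 2 ≤ V.count a

open Classical in
/-- `density V W` is the proportion of the `C(|W|+1, 2)` substrings of `W`
(indexed by pairs `(i,j)` with `0 ≤ i < j ≤ |W|`) that are instances of `V`. -/
noncomputable def density {α β : Type*} (V : List α) (W : List β) : ℝ :=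
  (((Finset.range (W.length + 1) ×ˢ Finset.range (W.length + 1)).filter
      (fun p => p.1 < p.2 ∧ IsInstance V (subword W p.1 p.2))).card : ℝ) /
    (Nat.choose (W.length + 1) 2)

/-- The expected density of `V` in a word of length `n` chosen uniformly at
random over the alphabet `σ` (words of length `n` being encoded as `Fin n → σ`). -/
noncomputable def expDensity {α : Type*} (V : List α) (σ : Type*) [Fintype σ] (n : ℕ) : ℝ :=
  (∑ w : Fin n → σ, density V (List.ofFn w)) / (Fintype.card σ : ℝ) ^ n

/-- `homCount V W` counts the encounters of `V` in `W`: triples `(a, b, φ)`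
where `φ` is a nonerasing homomorphism from the letters of `V` with
`W[a,b] = φ(V)`. -/
noncomputable def homCount {α σ : Type*} (V : List α) (W : List σ) : ℕ :=
  Set.ncard {t : ℕ × ℕ × ({a : α // a ∈ V} → List σ) |
    t.1 < t.2.1 ∧ t.2.1 ≤ W.length ∧ (∀ a, t.2.2 a ≠ []) ∧
    subword W t.1 t.2.1 = (V.attach.map t.2.2).flatten}

/-- Expected number of encounters of `V` in a uniformly random word of length `n`. -/
noncomputable def expHom {α : Type*} (V : List α) (σ : Type*) [Fintype σ] (n : ℕ) : ℝ :=
  (∑ w : Fin n → σ, (homCount V (List.ofFn w) : ℝ)) / (Fintype.card σ : ℝ) ^ n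

/-- `instProb V σ m` is the proportion of words in `σ^m` that are instances of `V`. -/
noncomputable def instProb {α : Type*} (V : List α) (σ : Type*) [Fintype σ] (m : ℕ) : ℝ :=
  (Nat.card {w : Fin m → σ // IsInstance V (List.ofFn w)} : ℝ) / (Fintype.card σ : ℝ) ^ m

/-- The variance of the density of `V` in a uniformly random word of length `n`. -/
noncomputable def varDensity {α : Type*} (V : List α) (σ : Type*) [Fintype σ] (n : ℕ) : ℝ :=
  (∑ w : Fin n → σ, (density V (List.ofFn w) - expDensity V σ n) ^ 2) /
    (Fintype.card σ : ℝ) ^ n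


set_option maxHeartbeats 1000000
set_option synthInstance.maxHeartbeats 1000000

namespace Aux

lemma flatten_eq_det {α σ : Type*} : ∀ (l : List α) (φ ψ : α → List σ),
    (∀ a ∈ l, (φ a).length = (ψ a).length) →
    (l.map φ).flatten = (l.map ψ).flatten → ∀ a ∈ l, φ a = ψ a := by
  intro l
  induction l with
  | nil => simp
  | cons h t ih =>
    intro φ ψ hlen hfl a ha
    simp only [List.map_cons, List.flatten_cons] at hfl
    obtain ⟨h1, h2⟩ := List.append_inj hfl (hlen h (by simp))
    rcases List.mem_cons.mp ha with rfl | ha'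
    · exact h1
    · exact ih φ ψ (fun a ha => hlen a (List.mem_cons_of_mem _ ha)) h2 a ha'

open Classical in
lemma instance_count_le {α σ : Type*} [DecidableEq α] [Fintype σ] (V : List α)
    (hdbl : Doubled V) (x₀ : σ) (m : ℕ) :
    (Finset.univ.filter (fun w : Fin m → σ => IsInstance V (List.ofFn w))).card ≤
      (m + 1) ^ V.toFinset.card * Fintype.card σ ^ (m / 2) := by
  set F : (Fin m → σ) → ((↥V.toFinset → Fin (m + 1)) × (Fin (m / 2) → σ)) :=
    fun w =>
      if h : IsInstance V (List.ofFn w) then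
        (fun a => ⟨min (h.choose a.1).length m, Nat.lt_succ_of_le (min_le_right _ _)⟩,
         fun t => ((V.toFinset.toList.map h.choose).flatten).getD t x₀)
      else (fun _ => ⟨0, Nat.succ_pos m⟩, fun _ => x₀) with hF
  -- facts about a choice φ for an instance w
  have key : ∀ (w : Fin m → σ) (h : IsInstance V (List.ofFn w)),
      (List.map (fun a => (h.choose a).length) V).sum = m := by
    intro w h
    have hw : List.ofFn w = (V.map h.choose).flatten := h.choose_spec.2
    have h1 : m = ((V.map h.choose).flatten).length := by
      rw [← hw]; simp
    rw [List.length_flatten, List.map_map] at h1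
    exact h1.symm
  have lenle : ∀ (w : Fin m → σ) (h : IsInstance V (List.ofFn w)) (a : α), a ∈ V →
      (h.choose a).length ≤ m := by
    intro w h a ha
    exact le_trans (List.single_le_sum (fun x _ => Nat.zero_le x) _
      (List.mem_map_of_mem (f := fun a => (h.choose a).length) ha)) (le_of_eq (key w h))
  have slen : ∀ (w : Fin m → σ) (h : IsInstance V (List.ofFn w)),
      ((V.toFinset.toList.map h.choose).flatten).length ≤ m / 2 ∧
      ((V.toFinset.toList.map h.choose).flatten).length
        = ∑ a ∈ V.toFinset, (h.choose a).length := by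
    intro w h
    have hlen : ((V.toFinset.toList.map h.choose).flatten).length
        = ∑ a ∈ V.toFinset, (h.choose a).length := by
      rw [List.length_flatten, List.map_map]
      exact Finset.sum_map_toList _ _
    refine ⟨?_, hlen⟩
    have hm : (List.map (fun a => (h.choose a).length) V).sum
        = ∑ a ∈ V.toFinset, V.count a * (h.choose a).length := by
      simpa [smul_eq_mul] using Finset.sum_list_map_count V (fun a => (h.choose a).length)
    have h2 : 2 * (∑ a ∈ V.toFinset, (h.choose a).length)
        ≤ ∑ a ∈ V.toFinset, V.count a * (h.choose a).length := by
      rw [Finset.mul_sum]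
      refine Finset.sum_le_sum (fun a ha => ?_)
      exact Nat.mul_le_mul_right _ (hdbl a (List.mem_toFinset.mp ha))
    have hk := key w h
    omega
  refine le_trans (Finset.card_le_card_of_injOn F (fun w _ => Finset.mem_univ _) ?_)
    (le_of_eq ?_)
  · intro w₁ hw₁ w₂ hw₂ heq
    simp only [Finset.coe_filter, Set.mem_setOf_eq, Finset.mem_univ, true_and] at hw₁ hw₂
    have h₁ : IsInstance V (List.ofFn w₁) := hw₁
    have h₂ : IsInstance V (List.ofFn w₂) := hw₂
    rw [hF] at heq
    simp only [dif_pos h₁, dif_pos h₂, Prod.mk.injEq] at heq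
    obtain ⟨heq1, heq2⟩ := heq
    have hlens : ∀ a ∈ V.toFinset, (h₁.choose a).length = (h₂.choose a).length := by
      intro a ha
      have hmin : min (h₁.choose a).length m = min (h₂.choose a).length m :=
        congrArg Fin.val (congrFun heq1 ⟨a, ha⟩)
      rwa [min_eq_left (lenle w₁ h₁ a (List.mem_toFinset.mp ha)),
        min_eq_left (lenle w₂ h₂ a (List.mem_toFinset.mp ha))] at hmin
    have hs : (V.toFinset.toList.map h₁.choose).flatten
        = (V.toFinset.toList.map h₂.choose).flatten := by
      have hl1 := (slen w₁ h₁).1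
      have hleq : ((V.toFinset.toList.map h₁.choose).flatten).length
          = ((V.toFinset.toList.map h₂.choose).flatten).length := by
        rw [(slen w₁ h₁).2, (slen w₂ h₂).2]
        exact Finset.sum_congr rfl hlens
      refine List.ext_getElem hleq (fun i hi₁ hi₂ => ?_)
      have hi : i < m / 2 := lt_of_lt_of_le hi₁ hl1
      have := congrFun heq2 ⟨i, hi⟩
      rwa [List.getD_eq_getElem _ _ hi₁, List.getD_eq_getElem _ _ hi₂] at this
    have hφ : ∀ a ∈ V, h₁.choose a = h₂.choose a := by
      intro a ha
      exact flatten_eq_det V.toFinset.toList _ _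
        (fun a ha => hlens a (Finset.mem_toList.mp ha)) hs a
        (Finset.mem_toList.mpr (List.mem_toFinset.mpr ha))
    have : List.ofFn w₁ = List.ofFn w₂ := by
      rw [h₁.choose_spec.2, h₂.choose_spec.2, List.map_congr_left hφ]
    exact List.ofFn_inj.mp this
  · rw [Finset.card_univ, Fintype.card_prod, Fintype.card_fun, Fintype.card_fun, Fintype.card_coe, Fintype.card_fin, Fintype.card_fin]

lemma subword_ofFn {σ : Type*} {n i j : ℕ} (hij : i < j) (hj : j ≤ n) (w : Fin n → σ) :
    subword (List.ofFn w) i j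
      = List.ofFn (fun t : Fin (j - i) => w ⟨i + t, by have := t.2; omega⟩) := by
  refine List.ext_getElem ?_ ?_
  · simp only [subword, List.length_take, List.length_drop, List.length_ofFn]
    omega
  · intro t h1 h2
    simp only [subword, List.getElem_take, List.getElem_drop, List.getElem_ofFn]

open Classical in
lemma window_count_le {α σ : Type*} [Fintype σ] (V : List α) {n i j : ℕ}
    (hij : i < j) (hj : j ≤ n) :
    (Finset.univ.filter
        (fun w : Fin n → σ => IsInstance V (subword (List.ofFn w) i j))).card ≤
      (Finset.univ.filter (fun v : Fin (j - i) → σ => IsInstance V (List.ofFn v))).card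
        * Fintype.card σ ^ (n - (j - i)) := by
  set G : (Fin n → σ) → (Fin (j - i) → σ) × (Fin (n - (j - i)) → σ) :=
    fun w => (fun t => w ⟨i + t, by have := t.2; omega⟩,
              fun t => if _ : (t : ℕ) < i then w ⟨t, by have := t.2; omega⟩
                       else w ⟨t + (j - i), by have := t.2; omega⟩) with hG
  refine le_trans (Finset.card_le_card_of_injOn
    (t := (Finset.univ.filter (fun v : Fin (j - i) → σ => IsInstance V (List.ofFn v))) ×ˢ
      (Finset.univ : Finset (Fin (n - (j - i)) → σ))) G ?_ ?_) (le_of_eq ?_)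
  · intro w hw
    simp only [Finset.mem_coe, Finset.mem_filter, Finset.mem_univ, true_and] at hw
    refine Finset.mem_product.mpr ⟨Finset.mem_filter.mpr ⟨Finset.mem_univ _, ?_⟩,
      Finset.mem_univ _⟩
    rw [subword_ofFn hij hj w] at hw
    exact hw
  · intro w₁ _ w₂ _ heq
    have heq1 := congrArg Prod.fst heq
    have heq2 := congrArg Prod.snd heq
    simp only [hG] at heq1 heq2
    funext s
    by_cases hs1 : (s : ℕ) < i
    · have := congrFun heq2 ⟨s, by have := s.2; omega⟩
      simp only [dif_pos hs1] at this
      simpa using this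
    · by_cases hs2 : (s : ℕ) < j
      · have := congrFun heq1 ⟨(s : ℕ) - i, by have := s.2; omega⟩
        have h' : i + ((s : ℕ) - i) = (s : ℕ) := by omega
        simp only [h'] at this
        simpa using this
      · have hlt : (s : ℕ) - (j - i) < n - (j - i) := by have := s.2; omega
        have := congrFun heq2 ⟨(s : ℕ) - (j - i), hlt⟩
        have hni : ¬ ((s : ℕ) - (j - i) < i) := by omega
        simp only [dif_neg hni] at this
        have h' : (s : ℕ) - (j - i) + (j - i) = (s : ℕ) := by omega
        simp only [h'] at this
        simpa using this
  · rw [Finset.card_product, Finset.card_univ, Fintype.card_fun, Fintype.card_fin]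
/-- The length cutoff. -/
def cut (k p n : ℕ) : ℕ := 2 * (k + p + 3) * Nat.clog 2 (n + 2)

/-- Pairs (i,j), i < j ≤ n, of distance greater than L. -/
def Slong (L n : ℕ) : Finset (ℕ × ℕ) :=
  (Finset.range (n+1) ×ˢ Finset.range (n+1)).filter (fun q => q.1 < q.2 ∧ L < q.2 - q.1)

/-- The bad event: some long substring is an instance. -/
def Bprop {α σ : Type*} (V : List α) (L n : ℕ) (w : Fin n → σ) : Prop :=
  ∃ ij ∈ Slong L n, IsInstance V (subword (List.ofFn w) ij.1 ij.2)

open Classical in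
lemma Bcard_le {α σ : Type*} [DecidableEq α] [Fintype σ] (V : List α)
    (hdbl : Doubled V) (hq : 2 ≤ Fintype.card σ) (p n : ℕ) :
    (Finset.univ.filter (fun w : Fin n → σ => Bprop V (cut V.toFinset.card p n) n w)).card * (n + 2) ^ (p + 1)
      ≤ Fintype.card σ ^ n := by
  have hσ : Nonempty σ := Fintype.card_pos_iff.mp (by omega)
  obtain ⟨x₀⟩ := hσ
  set k := V.toFinset.card with hk
  set c := Nat.clog 2 (n + 2) with hc
  set q := Fintype.card σ with hqdef
  have hunion : (Finset.univ.filter (fun w : Fin n → σ => Bprop V (cut k p n) n w)).card ≤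
      ∑ ij ∈ Slong (cut k p n) n,
        (Finset.univ.filter (fun w : Fin n → σ =>
          IsInstance V (subword (List.ofFn w) ij.1 ij.2))).card := by
    refine le_trans (Finset.card_le_card ?_) Finset.card_biUnion_le
    intro w hw
    replace hw := (Finset.mem_filter.mp hw).2
    simp only [Finset.mem_filter, Finset.mem_univ, true_and, Bprop] at hw
    obtain ⟨ij, hij, hinst⟩ := hw
    exact Finset.mem_biUnion.mpr ⟨ij, hij, Finset.mem_filter.mpr ⟨Finset.mem_univ _, hinst⟩⟩
  have hterm : ∀ ij ∈ Slong (cut k p n) n,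
      (Finset.univ.filter (fun w : Fin n → σ =>
          IsInstance V (subword (List.ofFn w) ij.1 ij.2))).card * (n+2)^(k+p+3)
        ≤ (n+1)^k * q ^ n := by
    intro ij hij
    simp only [Slong, Finset.mem_filter, Finset.mem_product, Finset.mem_range] at hij
    obtain ⟨⟨hi, hj⟩, hlt, hL⟩ := hij
    set m := ij.2 - ij.1 with hm
    have hmn : m ≤ n := by omega
    have h1 := window_count_le V (σ := σ) (n := n) hlt (by omega)
    have h2 := instance_count_le V hdbl x₀ m
    have h3 : (n+2)^(k+p+3) ≤ q ^ (m - m/2) := by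
      calc (n+2)^(k+p+3) ≤ (2^c)^(k+p+3) :=
            Nat.pow_le_pow_left (Nat.le_pow_clog one_lt_two _) _
        _ = 2^(c*(k+p+3)) := by rw [← pow_mul]
        _ ≤ 2^(m - m/2) := by
              have hcut : 2*(c*(k+p+3)) = cut k p n := by
                simp only [cut, hc]; ring
              exact Nat.pow_le_pow_right (by norm_num) (by omega)
        _ ≤ q ^ (m - m/2) := Nat.pow_le_pow_left hq _
    calc (Finset.univ.filter (fun w : Fin n → σ =>
          IsInstance V (subword (List.ofFn w) ij.1 ij.2))).card * (n+2)^(k+p+3)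
        ≤ ((m+1)^k * q^(m/2) * q^(n-m)) * q^(m - m/2) :=
          Nat.mul_le_mul (le_trans h1 (Nat.mul_le_mul_right _ h2)) h3
      _ = (m+1)^k * q^(m/2 + (n-m) + (m - m/2)) := by rw [pow_add, pow_add]; ring
      _ = (m+1)^k * q^n := by rw [show m/2 + (n-m) + (m - m/2) = n from by omega]
      _ ≤ (n+1)^k * q^n := Nat.mul_le_mul_right _ (Nat.pow_le_pow_left (by omega) _)
  have hS : (Slong (cut k p n) n).card ≤ (n+1)^2 := by
    refine le_trans (Finset.card_le_card (Finset.filter_subset _ _)) ?_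
    rw [Finset.card_product, Finset.card_range, pow_two]
  have htotal : (Finset.univ.filter (fun w : Fin n → σ => Bprop V (cut k p n) n w)).card * (n+2)^(k+p+3)
      ≤ (n+2)^(k+2) * q ^ n := by
    calc (Finset.univ.filter (fun w : Fin n → σ => Bprop V (cut k p n) n w)).card * (n+2)^(k+p+3)
        ≤ (∑ ij ∈ Slong (cut k p n) n,
            (Finset.univ.filter (fun w : Fin n → σ =>
              IsInstance V (subword (List.ofFn w) ij.1 ij.2))).card) * (n+2)^(k+p+3) :=
          Nat.mul_le_mul_right _ hunion
      _ = ∑ ij ∈ Slong (cut k p n) n,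
            (Finset.univ.filter (fun w : Fin n → σ =>
              IsInstance V (subword (List.ofFn w) ij.1 ij.2))).card * (n+2)^(k+p+3) :=
          Finset.sum_mul _ _ _
      _ ≤ ∑ _ij ∈ Slong (cut k p n) n, (n+1)^k * q ^ n := Finset.sum_le_sum hterm
      _ = (Slong (cut k p n) n).card * ((n+1)^k * q ^ n) := by
          rw [Finset.sum_const, smul_eq_mul]
      _ ≤ (n+1)^2 * ((n+1)^k * q ^ n) := Nat.mul_le_mul_right _ hS
      _ ≤ (n+2)^(k+2) * q ^ n := by
          rw [← mul_assoc]
          refine Nat.mul_le_mul_right _ ?_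
          calc (n+1)^2*(n+1)^k = (n+1)^(k+2) := by rw [← pow_add, show 2+k = k+2 from by omega]
            _ ≤ (n+2)^(k+2) := Nat.pow_le_pow_left (by omega) _
  refine Nat.le_of_mul_le_mul_right ?_ (pow_pos (show 0 < n+2 by omega) (k+2))
  calc (Finset.univ.filter (fun w : Fin n → σ => Bprop V (cut k p n) n w)).card * (n+2)^(p+1) * (n+2)^(k+2)
      = (Finset.univ.filter (fun w : Fin n → σ => Bprop V (cut k p n) n w)).card * (n+2)^(k+p+3) := by
        have hpow : ((n:ℕ)+2)^(p+1)*(n+2)^(k+2) = (n+2)^(k+p+3) := by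
          rw [← pow_add]; congr 1; omega
        rw [mul_assoc, hpow]
    _ ≤ (n+2)^(k+2) * q ^ n := htotal
    _ = q ^ n * (n+2)^(k+2) := mul_comm _ _
/-- Cardinality of the set of short pairs. -/
lemma short_card_le (n L : ℕ) :
    (((Finset.range (n+1) ×ˢ Finset.range (n+1))).filter
      (fun q : ℕ × ℕ => q.1 < q.2 ∧ ¬ L < q.2 - q.1)).card ≤ (n+1) * L := by
  classical
  refine le_trans (Finset.card_le_card_of_injOn
    (t := Finset.range (n+1) ×ˢ Finset.range L)
    (fun q => (q.2, q.2 - q.1 - 1)) ?_ ?_) (le_of_eq ?_)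
  · intro q hq
    simp only [Finset.mem_coe, Finset.mem_filter, Finset.mem_product, Finset.mem_range] at hq ⊢
    omega
  · intro q hq r hr heq
    simp only [Finset.coe_filter, Set.mem_setOf_eq, Finset.mem_product, Finset.mem_range] at hq hr
    have h1 : q.2 = r.2 := congrArg Prod.fst heq
    have h2 : q.2 - q.1 - 1 = r.2 - r.1 - 1 := congrArg Prod.snd heq
    have : q.1 = r.1 := by omega
    exact Prod.ext this h1
  · rw [Finset.card_product, Finset.card_range, Finset.card_range]

/-- clog bound by real log. -/
lemma clog_le_log {n : ℕ} (hn : 4 ≤ n) :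
    (Nat.clog 2 (n+2) : ℝ) ≤ 5 * Real.log n := by
  set c := Nat.clog 2 (n+2) with hc
  have hc1 : 1 ≤ c := Nat.clog_pos one_lt_two (by omega)
  have hpred : 2 ^ (c - 1) < n + 2 := by
    have := Nat.pow_pred_clog_lt_self one_lt_two (x := n + 2) (by omega)
    simpa [← hc, Nat.pred_eq_sub_one] using this
  have hnsq : n + 2 ≤ n ^ 2 := by
    calc n + 2 ≤ 2 * n := by omega
      _ ≤ n * n := Nat.mul_le_mul_right n (by omega)
      _ = n ^ 2 := (sq n).symm
  have hr : (2:ℝ) ^ (c - 1) ≤ (n:ℝ) ^ 2 := by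
    have h := le_trans (Nat.le_of_lt hpred) hnsq
    exact_mod_cast h
  have hlogn1 : (1:ℝ) ≤ Real.log n := by
    rw [Real.le_log_iff_exp_le (by positivity)]
    calc Real.exp 1 ≤ 2.7182818286 := le_of_lt Real.exp_one_lt_d9
      _ ≤ (4:ℝ) := by norm_num
      _ ≤ (n:ℝ) := by exact_mod_cast hn
  have hlog : ((c:ℝ) - 1) * Real.log 2 ≤ 2 * Real.log n := by
    have := Real.log_le_log (by positivity) hr
    rw [Real.log_pow, Real.log_pow] at this
    have hcast : ((c - 1 : ℕ) : ℝ) = (c:ℝ) - 1 := by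
      push_cast [Nat.cast_sub hc1]; ring
    rw [hcast] at this
    exact_mod_cast this
  have hl2 : (1/2 : ℝ) ≤ Real.log 2 := by
    have := Real.log_two_gt_d9; linarith
  have hc1' : (1:ℝ) ≤ (c:ℝ) := by exact_mod_cast hc1
  nlinarith [Real.log_nonneg (by exact_mod_cast (by omega : (1:ℕ) ≤ n) : (1:ℝ) ≤ (n:ℝ))]
end Aux

/-- For a doubled word `V`, `|Σ| = q ≥ 2`, and any positive integer `p`, the
`p`-th central moment satisfies `E(|δ(V,W_n) - E(δ(V,W_n))|^p) = O((log n / n)^p)`. -/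
theorem stmt17 {α σ : Type*} [DecidableEq α] [Fintype σ] (V : List α)
    (hdbl : Doubled V) (hq : 2 ≤ Fintype.card σ) (p : ℕ) (hp : 0 < p) :
    (fun n : ℕ =>
        (∑ w : Fin n → σ, |density V (List.ofFn w) - expDensity V σ n| ^ p) /
          (Fintype.card σ : ℝ) ^ n)
      =O[atTop] (fun n : ℕ => (Real.log n / n) ^ p) := by
  classical
  have hq0 : (0:ℝ) < (Fintype.card σ : ℝ) := by
    have : (0:ℕ) < Fintype.card σ := by omega
    exact_mod_cast this
  set k := V.toFinset.card with hk
  set c₁ : ℝ := 10 * ((k:ℝ) + p + 3) with hc₁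
  have hc₁pos : 0 < c₁ := by positivity
  rw [isBigO_iff]
  refine ⟨(4*c₁+4)^p + 6^p, ?_⟩
  have hlog0 : Tendsto (fun n : ℕ => Real.log n / n) atTop (nhds 0) := by
    have h1 : Tendsto (fun x : ℝ => Real.log x / x) atTop (nhds 0) :=
      Real.isLittleO_log_id_atTop.tendsto_div_nhds_zero
    exact h1.comp tendsto_natCast_atTop_atTop
  have hev1 : ∀ᶠ n : ℕ in atTop, c₁ * (Real.log n / n) ≤ 1/4 := by
    have hlt : (0:ℝ) < 1/(8*c₁) := by positivity
    filter_upwards [hlog0.eventually (eventually_le_nhds hlt)] with n hn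
    have hcc : c₁ * (1/(8*c₁)) = 1/8 := by field_simp
    calc c₁ * (Real.log n / n) ≤ c₁ * (1/(8*c₁)) :=
          mul_le_mul_of_nonneg_left hn (le_of_lt hc₁pos)
      _ ≤ 1/4 := by rw [hcc]; norm_num
  filter_upwards [hev1, eventually_ge_atTop 4] with n hev hn4
  -- basic facts about this n
  have hn1 : (1:ℝ) ≤ (n:ℝ) := by exact_mod_cast (by omega : 1 ≤ n)
  have hn4' : (4:ℝ) ≤ (n:ℝ) := by exact_mod_cast hn4
  have hnpos : (0:ℝ) < n := by linarith
  have hnne : (n:ℝ) ≠ 0 := ne_of_gt hnpos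
  have hlogn1 : (1:ℝ) ≤ Real.log n := by
    rw [Real.le_log_iff_exp_le hnpos]
    calc Real.exp 1 ≤ 2.7182818286 := le_of_lt Real.exp_one_lt_d9
      _ ≤ (4:ℝ) := by norm_num
      _ ≤ (n:ℝ) := hn4'
  have hx0 : 0 < Real.log n / n := div_pos (lt_of_lt_of_le one_pos hlogn1) hnpos
  set L := Aux.cut k p n with hLdef
  set C : ℝ := (Nat.choose (n+1) 2 : ℝ) with hC
  have hCval : C = (n:ℝ)*((n:ℝ)+1)/2 := by
    have h2 : 2 ∣ (n+1)*n := by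
      rw [mul_comm]; exact (Nat.even_mul_succ_self n).two_dvd
    have hch : 2 * Nat.choose (n+1) 2 = (n+1)*n := by
      rw [Nat.choose_two_right]
      simp only [Nat.add_sub_cancel]
      exact Nat.mul_div_cancel' h2
    have hcast : (2:ℝ) * C = ((n:ℝ)+1)*(n:ℝ) := by
      rw [hC]
      exact_mod_cast congrArg (Nat.cast (R := ℝ)) hch
    linarith
  have hCpos : (0:ℝ) < C := by rw [hCval]; positivity
  set NB := (Finset.univ.filter (fun w : Fin n → σ => Aux.Bprop V L n w)).card with hNB
  set PB : ℝ := (NB:ℝ)/(Fintype.card σ : ℝ)^n with hPBdef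
  have hqnpos : (0:ℝ) < (Fintype.card σ : ℝ)^n := pow_pos hq0 n
  have hPB0 : 0 ≤ PB := by
    rw [hPBdef]; exact div_nonneg (Nat.cast_nonneg _) (le_of_lt hqnpos)
  -- probability of the bad event
  have hPBb : PB * ((n:ℝ)+2)^(p+1) ≤ 1 := by
    have hnat := Aux.Bcard_le (σ := σ) V hdbl hq p n
    have hr : (NB:ℝ) * ((n:ℝ)+2)^(p+1) ≤ (Fintype.card σ : ℝ)^n := by
      exact_mod_cast hnat
    rw [hPBdef, div_mul_eq_mul_div, div_le_one hqnpos]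
    exact hr
  have hppos : (0:ℝ) < ((n:ℝ)+2)^(p+1) := by positivity
  have hPBle : PB ≤ 1/((n:ℝ)+2)^(p+1) := by
    rw [le_div_iff₀ hppos]; exact hPBb
  have hPB1n : PB ≤ 1/(n:ℝ) := by
    refine le_trans hPBle ?_
    apply one_div_le_one_div_of_le hnpos
    calc (n:ℝ) ≤ (n:ℝ)+2 := by linarith
      _ ≤ ((n:ℝ)+2)^(p+1) := le_self_pow₀ (by linarith) (by omega)
  have hPBp : PB ≤ (Real.log n/(n:ℝ))^p := by
    have h1 : PB ≤ 1/(n:ℝ)^(p+1) := by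
      refine le_trans hPBle ?_
      apply one_div_le_one_div_of_le (by positivity)
      exact pow_le_pow_left₀ (by linarith) (by linarith) _
    have h2 : (1:ℝ)/(n:ℝ)^(p+1) ≤ (1/(n:ℝ))^p := by
      rw [← one_div_pow, pow_succ]
      have hle1 : 1/(n:ℝ) ≤ 1 := by rw [div_le_one hnpos]; exact hn1
      calc (1/(n:ℝ))^p * (1/(n:ℝ)) ≤ (1/(n:ℝ))^p * 1 :=
            mul_le_mul_of_nonneg_left hle1 (by positivity)
        _ = (1/(n:ℝ))^p := mul_one _
    have h3 : (1/(n:ℝ))^p ≤ (Real.log n/(n:ℝ))^p := by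
      apply pow_le_pow_left₀ (by positivity)
      gcongr
    exact le_trans h1 (le_trans h2 h3)
  -- the length cutoff is logarithmic
  have hLlog : (L:ℝ) ≤ c₁ * Real.log n := by
    have hclog := Aux.clog_le_log (n := n) (by omega)
    calc (L:ℝ) = 2*((k:ℝ)+p+3)*(Nat.clog 2 (n+2) : ℝ) := by
          rw [hLdef, Aux.cut]; push_cast; ring
      _ ≤ 2*((k:ℝ)+p+3)*(5*Real.log n) := by
          exact mul_le_mul_of_nonneg_left hclog (by positivity)
      _ = c₁ * Real.log n := by rw [hc₁]; ring
  -- rewriting densities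
  have hdens_eq : ∀ w : Fin n → σ, density V (List.ofFn w)
      = ((((Finset.range (n+1) ×ˢ Finset.range (n+1)).filter
          (fun ij : ℕ×ℕ => ij.1 < ij.2 ∧ IsInstance V (subword (List.ofFn w) ij.1 ij.2))).card : ℝ))/C := by
    intro w
    rw [hC]
    simp only [density, List.length_ofFn]
  have hd0 : ∀ w : Fin n → σ, 0 ≤ density V (List.ofFn w) := by
    intro w; rw [hdens_eq w]
    exact div_nonneg (Nat.cast_nonneg _) (le_of_lt hCpos)
  have hE0 : 0 ≤ expDensity V σ n :=
    div_nonneg (Finset.sum_nonneg fun w _ => hd0 w) (le_of_lt hqnpos)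
  set s : ℝ := (((n:ℝ)+1) * (L:ℝ))/C with hs
  have hs0 : 0 ≤ s := by
    rw [hs]; exact div_nonneg (by positivity) (le_of_lt hCpos)
  have hsval : s ≤ 2*(L:ℝ)/(n:ℝ) := by
    rw [hs, hCval]
    have hee : ((n:ℝ)+1)*(L:ℝ)/((n:ℝ)*((n:ℝ)+1)/2) = 2*(L:ℝ)/(n:ℝ) := by
      field_simp
    exact le_of_eq hee
  -- the pointwise density bound
  have hF1 : ∀ w : Fin n → σ, density V (List.ofFn w)
      ≤ s + 4 * (if Aux.Bprop V L n w then 1 else 0) := by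
    intro w
    rw [hdens_eq w]
    by_cases hBw : Aux.Bprop V L n w
    · rw [if_pos hBw]
      have hnat : (((Finset.range (n+1) ×ˢ Finset.range (n+1)).filter
          (fun ij : ℕ×ℕ => ij.1 < ij.2 ∧ IsInstance V (subword (List.ofFn w) ij.1 ij.2))).card)
            ≤ (n+1)*(n+1) := by
        refine le_trans (Finset.card_le_card (Finset.filter_subset _ _)) ?_
        rw [Finset.card_product, Finset.card_range]
      have h4 : ((((Finset.range (n+1) ×ˢ Finset.range (n+1)).filter
          (fun ij : ℕ×ℕ => ij.1 < ij.2 ∧ IsInstance V (subword (List.ofFn w) ij.1 ij.2))).card : ℝ))/C ≤ 4 := by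
        rw [div_le_iff₀ hCpos, hCval]
        calc ((((Finset.range (n+1) ×ˢ Finset.range (n+1)).filter
            (fun ij : ℕ×ℕ => ij.1 < ij.2 ∧ IsInstance V (subword (List.ofFn w) ij.1 ij.2))).card : ℝ))
            ≤ ((n:ℝ)+1)*((n:ℝ)+1) := by exact_mod_cast hnat
          _ ≤ 4*((n:ℝ)*((n:ℝ)+1)/2) := by nlinarith
      linarith
    · rw [if_neg hBw]
      have hsub : ((Finset.range (n+1) ×ˢ Finset.range (n+1)).filter
          (fun ij : ℕ×ℕ => ij.1 < ij.2 ∧ IsInstance V (subword (List.ofFn w) ij.1 ij.2)))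
          ⊆ ((Finset.range (n+1) ×ˢ Finset.range (n+1)).filter
            (fun ij : ℕ×ℕ => ij.1 < ij.2 ∧ ¬ L < ij.2 - ij.1)) := by
        intro ij hij
        simp only [Finset.mem_filter] at hij ⊢
        obtain ⟨hmem, hlt, hinst⟩ := hij
        refine ⟨hmem, hlt, fun hlong => ?_⟩
        exact hBw ⟨ij, Finset.mem_filter.mpr ⟨hmem, hlt, hlong⟩, hinst⟩
      have hcard2 : ((Finset.range (n+1) ×ˢ Finset.range (n+1)).filter
          (fun ij : ℕ×ℕ => ij.1 < ij.2 ∧ IsInstance V (subword (List.ofFn w) ij.1 ij.2))).card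
          ≤ (n+1)*L := le_trans (Finset.card_le_card hsub) (Aux.short_card_le n L)
      have : ((((Finset.range (n+1) ×ˢ Finset.range (n+1)).filter
          (fun ij : ℕ×ℕ => ij.1 < ij.2 ∧ IsInstance V (subword (List.ofFn w) ij.1 ij.2))).card : ℝ))/C
          ≤ s := by
        have hcastle : ((((Finset.range (n+1) ×ˢ Finset.range (n+1)).filter
            (fun ij : ℕ×ℕ => ij.1 < ij.2 ∧ IsInstance V (subword (List.ofFn w) ij.1 ij.2))).card : ℕ) : ℝ)
            ≤ ((n:ℝ)+1)*(L:ℝ) := by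
          calc ((((Finset.range (n+1) ×ˢ Finset.range (n+1)).filter
              (fun ij : ℕ×ℕ => ij.1 < ij.2 ∧ IsInstance V (subword (List.ofFn w) ij.1 ij.2))).card : ℕ) : ℝ)
              ≤ (((n+1)*L : ℕ) : ℝ) := by exact_mod_cast hcard2
            _ = ((n:ℝ)+1)*(L:ℝ) := by push_cast; ring
        rw [hs]
        exact (div_le_div_iff_of_pos_right hCpos).mpr hcastle
      linarith
  -- expectation bound
  have hEexp : expDensity V σ n
      = (∑ w : Fin n → σ, density V (List.ofFn w)) / (Fintype.card σ : ℝ)^n := rfl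
  have hcardfun : (Fintype.card (Fin n → σ) : ℝ) = (Fintype.card σ : ℝ)^n := by
    rw [Fintype.card_fun, Fintype.card_fin]; push_cast; ring
  have hE : expDensity V σ n ≤ s + 4 * PB := by
    rw [hEexp, div_le_iff₀ hqnpos]
    calc (∑ w : Fin n → σ, density V (List.ofFn w))
        ≤ ∑ w : Fin n → σ, (s + 4 * (if Aux.Bprop V L n w then 1 else 0)) :=
          Finset.sum_le_sum (fun w _ => hF1 w)
      _ = (Fintype.card σ : ℝ)^n * s + 4 * (NB:ℝ) := by
          rw [Finset.sum_add_distrib, Finset.sum_const, Finset.card_univ, nsmul_eq_mul,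
            hcardfun, ← Finset.mul_sum, Finset.sum_boole, hNB]
      _ = (s + 4 * PB) * (Fintype.card σ : ℝ)^n := by
          rw [hPBdef]; field_simp
  -- key moment bound
  have hA0 : (0:ℝ) ≤ 2*s+4*PB := by linarith
  have hkey : (∑ w : Fin n → σ, |density V (List.ofFn w) - expDensity V σ n|^p)
      / (Fintype.card σ : ℝ)^n
      ≤ (2*s+4*PB)^p + PB*(2*s+4*PB+4)^p := by
    have hpt : ∀ w : Fin n → σ, |density V (List.ofFn w) - expDensity V σ n|^p
        ≤ (2*s+4*PB)^p + (if Aux.Bprop V L n w then 1 else 0)*(2*s+4*PB+4)^p := by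
      intro w
      by_cases hBw : Aux.Bprop V L n w
      · have h1 := hF1 w
        rw [if_pos hBw] at h1
        have habs : |density V (List.ofFn w) - expDensity V σ n| ≤ 2*s+4*PB+4 := by
          rw [abs_le]
          constructor
          · linarith [hd0 w, hE]
          · linarith [hE0, h1]
        rw [if_pos hBw, one_mul]
        refine le_trans (pow_le_pow_left₀ (abs_nonneg _) habs p) ?_
        exact le_add_of_nonneg_left (pow_nonneg hA0 p)
      · have h1 := hF1 w
        rw [if_neg hBw, mul_zero, add_zero] at h1
        have habs : |density V (List.ofFn w) - expDensity V σ n| ≤ 2*s+4*PB := by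
          rw [abs_le]
          constructor
          · linarith [hd0 w, hE, hs0]
          · linarith [hE0, h1, hs0, hPB0]
        rw [if_neg hBw, zero_mul, add_zero]
        exact pow_le_pow_left₀ (abs_nonneg _) habs p
    rw [div_le_iff₀ hqnpos]
    calc (∑ w : Fin n → σ, |density V (List.ofFn w) - expDensity V σ n|^p)
        ≤ ∑ w : Fin n → σ,
            ((2*s+4*PB)^p + (if Aux.Bprop V L n w then 1 else 0)*(2*s+4*PB+4)^p) :=
          Finset.sum_le_sum (fun w _ => hpt w)
      _ = (Fintype.card σ : ℝ)^n * (2*s+4*PB)^p + (NB:ℝ)*(2*s+4*PB+4)^p := by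
          rw [Finset.sum_add_distrib, Finset.sum_const, Finset.card_univ, nsmul_eq_mul,
            hcardfun, ← Finset.sum_mul, Finset.sum_boole, hNB]
      _ = ((2*s+4*PB)^p + PB*(2*s+4*PB+4)^p) * (Fintype.card σ : ℝ)^n := by
          rw [hPBdef]; field_simp
  -- final estimates
  have h2s : 2*s ≤ 4*(c₁*(Real.log n/(n:ℝ))) := by
    have hs2 : s ≤ 2*(c₁*Real.log n)/(n:ℝ) := by
      refine le_trans hsval ?_
      gcongr
    calc 2*s ≤ 2*(2*(c₁*Real.log n)/(n:ℝ)) := by linarith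
      _ = 4*(c₁*(Real.log n/(n:ℝ))) := by ring
  have h4PB : 4*PB ≤ 4*(Real.log n/(n:ℝ)) := by
    have hle : PB ≤ Real.log n/(n:ℝ) := by
      refine le_trans hPB1n ?_
      gcongr
    linarith
  have hA : 2*s+4*PB ≤ (4*c₁+4)*(Real.log n/(n:ℝ)) := by
    calc 2*s+4*PB ≤ 4*(c₁*(Real.log n/(n:ℝ))) + 4*(Real.log n/(n:ℝ)) := by linarith
      _ = (4*c₁+4)*(Real.log n/(n:ℝ)) := by ring
  have h6 : 2*s+4*PB+4 ≤ 6 := by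
    have h1 : 2*s ≤ 1 := by
      calc 2*s ≤ 4*(c₁*(Real.log n/(n:ℝ))) := h2s
        _ ≤ 4*(1/4) := by linarith [hev]
        _ = 1 := by norm_num
    have h2 : 4*PB ≤ 1 := by
      calc 4*PB ≤ 4*(1/(n:ℝ)) := by linarith [hPB1n]
        _ ≤ 1 := by rw [mul_one_div, div_le_one hnpos]; exact hn4'
    linarith
  have hLHS0 : 0 ≤ (∑ w : Fin n → σ, |density V (List.ofFn w) - expDensity V σ n|^p)
      / (Fintype.card σ : ℝ)^n :=
    div_nonneg (Finset.sum_nonneg fun w _ => pow_nonneg (abs_nonneg _) p) (le_of_lt hqnpos)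
  rw [Real.norm_eq_abs, Real.norm_eq_abs, abs_of_nonneg hLHS0,
    abs_of_nonneg (pow_nonneg (le_of_lt hx0) p)]
  calc (∑ w : Fin n → σ, |density V (List.ofFn w) - expDensity V σ n|^p)
      / (Fintype.card σ : ℝ)^n
      ≤ (2*s+4*PB)^p + PB*(2*s+4*PB+4)^p := hkey
    _ ≤ ((4*c₁+4)*(Real.log n/(n:ℝ)))^p + (Real.log n/(n:ℝ))^p*6^p := by
        refine add_le_add (pow_le_pow_left₀ hA0 hA p) ?_
        exact mul_le_mul hPBp (pow_le_pow_left₀ (by linarith) h6 p)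
          (pow_nonneg (by linarith) p) (pow_nonneg (le_of_lt hx0) p)
    _ = ((4*c₁+4)^p + 6^p) * (Real.log n/(n:ℝ))^p := by rw [mul_pow]; ring
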